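/- If the graph alphabet (V, Σ) is such that the subgraph induced by any two vertices is finite, then X ⊆ (V, Σ)* is regular if and only if the set of left quotients suff(X) = {w⁻¹X | w ∈ (V,Σ)*} is finite. -/

import Mathlib

namespace GA

/-- A graph alphabet: edges `S` between vertices `V`. -/
structure GraphAlphabet (V S : Type) where
  d0 : S → V
  d1 : S → V

variable {V S : Type}

/-- Typed words: triples `(u, ω, v)`. -/
abbrev TW (V S : Type) := V × List S × V

/-- Composability of a word from `u` to `v`. -/
def GraphAlphabet.Comp (G : GraphAlphabet V S) : V → List S → V → Prop
  | u, [], v => u = v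
  | u, a :: w, v => G.d0 a = u ∧ G.Comp (G.d1 a) w v

/-- `x` is a morphism of the free category `(V,S)*`. -/
def GraphAlphabet.IsTW (G : GraphAlphabet V S) (x : TW V S) : Prop :=
  G.Comp x.1 x.2.1 x.2.2

theorem GraphAlphabet.comp_snoc (G : GraphAlphabet V S) :
    ∀ {u : V} {w : List S} {v : V}, G.Comp u w v → ∀ {a : S}, G.d0 a = v →
      G.Comp u (w ++ [a]) (G.d1 a) := by
  intro u w
  induction w generalizing u with
  | nil =>
      intro v h a ha
      simp only [GraphAlphabet.Comp] at h
      subst h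
      exact ⟨ha, rfl⟩
  | cons b w ih =>
      intro v h a ha
      exact ⟨h.1, ih h.2 ha⟩

/-- Appending a single letter to a typed word. -/
def GraphAlphabet.snoc (G : GraphAlphabet V S) (x : TW V S) (a : S) : TW V S :=
  (x.1, x.2.1 ++ [a], G.d1 a)

/-- Concatenation of typed languages. -/
def cat (X Y : Set (TW V S)) : Set (TW V S) :=
  {z | ∃ (v : V) (w n : List S), (z.1, w, v) ∈ X ∧ (v, n, z.2.2) ∈ Y ∧ z.2.1 = w ++ n}

/-- `catPow X n = X^(n+1)`. -/
def catPow (X : Set (TW V S)) : ℕ → Set (TW V S)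
  | 0 => X
  | n + 1 => cat X (catPow X n)

/-- Kleene plus. -/
def kplus (X : Set (TW V S)) : Set (TW V S) := ⋃ n, catPow X n

/-- Rational sets of morphisms. -/
inductive Rational (G : GraphAlphabet V S) : Set (TW V S) → Prop
  | empty : Rational G ∅
  | single (a : S) : Rational G {(G.d0 a, [a], G.d1 a)}
  | union {X Y : Set (TW V S)} : Rational G X → Rational G Y → Rational G (X ∪ Y)
  | cat {X Y : Set (TW V S)} : Rational G X → Rational G Y → Rational G (cat X Y)
  | plus {X : Set (TW V S)} : Rational G X → Rational G (kplus X)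

/-- An automaton on a graph alphabet. -/
structure Auto (G : GraphAlphabet V S) (Q E : Type) where
  I : Set Q
  F : Set Q
  s : E → Q
  t : E → Q
  μ : Q → V
  lab : E → S
  src_ok : ∀ e, μ (s e) = G.d0 (lab e)
  tgt_ok : ∀ e, μ (t e) = G.d1 (lab e)

variable {G : GraphAlphabet V S} {Q E : Type}

/-- `A.Reach q w q'`: there is a path from `q` to `q'` labeled `w`. -/
inductive Auto.Reach (A : Auto G Q E) : Q → List S → Q → Prop
  | nil (q : Q) : A.Reach q [] q
  | cons (e : E) {w : List S} {q' : Q} :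
      A.Reach (A.t e) w q' → A.Reach (A.s e) (A.lab e :: w) q'

/-- The (typed) language of an automaton. -/
def Auto.Lang (A : Auto G Q E) : Set (TW V S) :=
  {x | ∃ q q', q ∈ A.I ∧ q' ∈ A.F ∧ A.Reach q x.2.1 q' ∧ A.μ q = x.1 ∧ A.μ q' = x.2.2}

/-- `X` is regular: recognized by a finite automaton on `(V,S)`. -/
def Regular (G : GraphAlphabet V S) (X : Set (TW V S)) : Prop :=
  ∃ (Q E : Type) (_ : Finite Q) (_ : Finite E) (A : Auto G Q E), A.Lang = X

/-- Determinism. -/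
def Auto.Deterministic (A : Auto G Q E) : Prop :=
  (∀ q₁ q₂, q₁ ∈ A.I → q₂ ∈ A.I → A.μ q₁ = A.μ q₂ → q₁ = q₂) ∧
  (∀ e₁ e₂ : E, A.s e₁ = A.s e₂ → A.lab e₁ = A.lab e₂ → e₁ = e₂)

/-- Completeness. -/
def Auto.IsComplete (A : Auto G Q E) : Prop :=
  (∀ v : V, ∃ q ∈ A.I, A.μ q = v) ∧
  (∀ (q : Q) (a : S), G.d0 a = A.μ q → ∃ e, A.s e = q ∧ A.lab e = a)

/-- Left quotient `w⁻¹X`. -/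
def GraphAlphabet.lquot (G : GraphAlphabet V S) (X : Set (TW V S)) (w : TW V S) :
    Set (TW V S) :=
  {u | G.IsTW u ∧ u.1 = w.2.2 ∧ (w.1, w.2.1 ++ u.2.1, u.2.2) ∈ X}

/-- Right quotient `Xw⁻¹`. -/
def GraphAlphabet.rquot (G : GraphAlphabet V S) (X : Set (TW V S)) (w : TW V S) :
    Set (TW V S) :=
  {u | G.IsTW u ∧ u.2.2 = w.1 ∧ (u.1, u.2.1 ++ w.2.1, w.2.2) ∈ X}

/-- `suff(X)`: the set of left quotients. -/
def suffQ (G : GraphAlphabet V S) (X : Set (TW V S)) : Set (Set (TW V S)) :=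
  {Y | ∃ w : TW V S, G.IsTW w ∧ G.lquot X w = Y}

/-- `pref(X)`: the set of right quotients. -/
def prefQ (G : GraphAlphabet V S) (X : Set (TW V S)) : Set (Set (TW V S)) :=
  {Y | ∃ w : TW V S, G.IsTW w ∧ G.rquot X w = Y}


section Helpers

variable {G : GraphAlphabet V S} {Q E : Type}

lemma comp_functional (G : GraphAlphabet V S) :
    ∀ {w : List S} {u v v' : V}, G.Comp u w v → G.Comp u w v' → v = v' := by
  intro w
  induction w with
  | nil => intro u v v' h h'; exact h.symm.trans h'
  | cons a w ih => intro u v v' h h'; exact ih h.2 h'.2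

lemma reach_comp (A : Auto G Q E) {q q' : Q} {w : List S} (h : A.Reach q w q') :
    G.Comp (A.μ q) w (A.μ q') := by
  induction h with
  | nil q => exact rfl
  | cons e h ih =>
      refine ⟨(A.src_ok e).symm, ?_⟩
      rwa [A.tgt_ok e] at ih

lemma reach_append (A : Auto G Q E) {q p q' : Q} {m n : List S}
    (h1 : A.Reach q m p) (h2 : A.Reach p n q') : A.Reach q (m ++ n) q' := by
  induction h1 with
  | nil => exact h2
  | cons e _ ih => exact Auto.Reach.cons e (ih h2)

lemma reach_split (A : Auto G Q E) :
    ∀ {m : List S} {q q' : Q} {n : List S}, A.Reach q (m ++ n) q' →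
      ∃ p, A.Reach q m p ∧ A.Reach p n q' := by
  intro m
  induction m with
  | nil => intro q q' n h; exact ⟨q, Auto.Reach.nil q, h⟩
  | cons a m ih =>
      intro q q' n h
      cases h with
      | cons e h' =>
          obtain ⟨p, h1, h2⟩ := ih h'
          exact ⟨p, Auto.Reach.cons e h1, h2⟩

/-- Left quotient of a set by a single letter. -/
def lqL (G : GraphAlphabet V S) (Y : Set (TW V S)) (a : S) : Set (TW V S) :=
  {u | G.IsTW u ∧ u.1 = G.d1 a ∧ (G.d0 a, a :: u.2.1, u.2.2) ∈ Y}

lemma lqL_lquot {X : Set (TW V S)} {w : TW V S} (hw : G.IsTW w) {a : S}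
    (ha : G.d0 a = w.2.2) :
    lqL G (G.lquot X w) a = G.lquot X (w.1, w.2.1 ++ [a], G.d1 a) := by
  obtain ⟨w1, wl, w2⟩ := w
  simp only at ha
  ext u
  constructor
  · rintro ⟨h1, h2, h3, h4, h5⟩
    exact ⟨h1, h2, by rw [List.append_assoc]; exact h5⟩
  · rintro ⟨h1, h2, h3⟩
    simp only at h2 h3
    refine ⟨h1, h2, ⟨rfl, ?_⟩, ha, ?_⟩
    · show G.Comp (G.d1 a) u.2.1 u.2.2
      rw [← h2]; exact h1
    · rwa [List.append_assoc] at h3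

lemma lquot_vertex {X : Set (TW V S)} {Y : Set (TW V S)} (hY : Y ∈ suffQ G X)
    {u u' : TW V S} (hu : u ∈ Y) (hu' : u' ∈ Y) : u.1 = u'.1 := by
  obtain ⟨w, -, rfl⟩ := hY
  exact hu.2.1.trans hu'.2.1.symm

end Helpers
lemma suffQ_finite_of_regular (G : GraphAlphabet V S) (X : Set (TW V S))
    (h : Regular G X) : (suffQ G X).Finite := by
  obtain ⟨Q, E, hQ, hE, A, hL⟩ := h
  have hsub : (suffQ G X) ⊆ (fun P : Set Q =>
      {u : TW V S | G.IsTW u ∧ ∃ p ∈ P, u.1 = A.μ p ∧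
        ∃ q' ∈ A.F, A.Reach p u.2.1 q' ∧ A.μ q' = u.2.2}) '' Set.univ := by
    rintro Y ⟨w, hw, rfl⟩
    refine ⟨{p | ∃ q ∈ A.I, A.μ q = w.1 ∧ A.Reach q w.2.1 p}, trivial, ?_⟩
    ext u
    constructor
    · rintro ⟨hTW, p, ⟨q, hqI, hμq, hr1⟩, hu1, q', hq'F, hr2, hμq'⟩
      have hμp : A.μ p = w.2.2 := by
        have h1 := reach_comp A hr1
        rw [hμq] at h1
        exact comp_functional G h1 hw
      refine ⟨hTW, hu1.trans hμp, ?_⟩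
      rw [← hL]
      exact ⟨q, q', hqI, hq'F, reach_append A hr1 hr2, hμq, hμq'⟩
    · rintro ⟨hTW, hu1, hmem⟩
      rw [← hL] at hmem
      obtain ⟨q, q', hqI, hq'F, hr, hμq, hμq'⟩ := hmem
      obtain ⟨p, hr1, hr2⟩ := reach_split A hr
      have hμp : A.μ p = w.2.2 := by
        have h1 := reach_comp A hr1
        rw [hμq] at h1
        exact comp_functional G h1 hw
      exact ⟨hTW, p, ⟨q, hqI, hμq, hr1⟩, hu1.trans hμp.symm, q', hq'F, hr2, hμq'⟩
  exact Set.Finite.subset (Set.Finite.image _ Set.finite_univ) hsub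
lemma lqL_mem_suffQ {X Y : Set (TW V S)} (hY : Y ∈ suffQ G X)
    {a : S} (ha : ∃ u ∈ Y, G.d0 a = u.1) : lqL G Y a ∈ suffQ G X := by
  obtain ⟨w, hw, rfl⟩ := hY
  obtain ⟨u, hu, hau⟩ := ha
  have h2 : G.d0 a = w.2.2 := hau.trans hu.2.1
  rw [lqL_lquot hw h2]
  exact ⟨_, show G.IsTW (w.1, w.2.1 ++ [a], G.d1 a) from G.comp_snoc hw h2, rfl⟩

lemma regular_of_suffQ_finite (G : GraphAlphabet V S)
    (hfin : ∀ u v : V,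
      {a : S | (G.d0 a = u ∨ G.d0 a = v) ∧ (G.d1 a = u ∨ G.d1 a = v)}.Finite)
    (X : Set (TW V S)) (hX : ∀ x ∈ X, G.IsTW x)
    (h : (suffQ G X).Finite) : Regular G X := by
  classical
  let Qt := {Y : Set (TW V S) // Y ∈ suffQ G X ∧ Y.Nonempty}
  haveI hQt : Finite Qt := by
    have h2 : {Y : Set (TW V S) | Y ∈ suffQ G X ∧ Y.Nonempty}.Finite :=
      h.subset (fun Y hY => hY.1)
    exact h2.to_subtype
  let mu : Qt → V := fun Y => Y.2.2.some.1
  have hmu : ∀ (Y : Qt) (u : TW V S), u ∈ Y.1 → u.1 = mu Y := fun Y u hu =>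
    lquot_vertex Y.2.1 hu Y.2.2.some_mem
  have hmu2 : ∀ (Y : Qt) (w₀ : TW V S), Y.1 = G.lquot X w₀ → mu Y = w₀.2.2 := by
    intro Y w₀ hY
    obtain ⟨u, hu⟩ := Y.2.2
    have h1 := hmu Y u hu
    rw [hY] at hu
    exact h1.symm.trans hu.2.1
  let Et := {p : Qt × S // G.d0 p.2 = mu p.1 ∧ (lqL G p.1.1 p.2).Nonempty}
  have htgtQ : ∀ e : Et, lqL G e.1.1.1 e.1.2 ∈ suffQ G X ∧ (lqL G e.1.1.1 e.1.2).Nonempty := by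
    intro e
    refine ⟨lqL_mem_suffQ e.1.1.2.1 ?_, e.2.2⟩
    obtain ⟨u, hu⟩ := e.1.1.2.2
    exact ⟨u, hu, e.2.1.trans (hmu e.1.1 u hu).symm⟩
  let A : Auto G Qt Et :=
    { I := {Y : Qt | ∃ v : V, Y.1 = G.lquot X (v, [], v)}
      F := {Y : Qt | ∃ v : V, ((v, [], v) : TW V S) ∈ Y.1}
      s := fun e => e.1.1
      t := fun e => ⟨lqL G e.1.1.1 e.1.2, htgtQ e⟩
      μ := mu
      lab := fun e => e.1.2
      src_ok := fun e => e.2.1.symm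
      tgt_ok := fun e => e.2.2.some_mem.2.1 }
  -- finiteness of the edge type
  haveI hEt : Finite Et := by
    let Aset : Set S := ⋃ (Y : Qt), ⋃ (Z : Qt), {a : S | G.d0 a = mu Y ∧ G.d1 a = mu Z}
    have hAset : Aset.Finite :=
      Set.finite_iUnion fun Y => Set.finite_iUnion fun Z =>
        (hfin (mu Y) (mu Z)).subset (fun a ha => ⟨Or.inl ha.1, Or.inr ha.2⟩)
    haveI := hAset.to_subtype
    have hlab : ∀ e : Et, e.1.2 ∈ Aset := by
      intro e
      refine Set.mem_iUnion.2 ⟨e.1.1, Set.mem_iUnion.2 ⟨A.t e, e.2.1, ?_⟩⟩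
      exact (A.tgt_ok e).symm
    refine Finite.of_injective (fun e : Et => ((e.1.1, ⟨e.1.2, hlab e⟩) : Qt × ↥Aset)) ?_
    rintro ⟨⟨Y1, a1⟩, p1⟩ ⟨⟨Y2, a2⟩, p2⟩ he
    simp only [Prod.mk.injEq, Subtype.mk.injEq] at he
    obtain ⟨h1, h2⟩ := he
    subst h1
    subst h2
    rfl
  -- soundness of runs
  have run_sound : ∀ {Y : Qt} {w : List S} {Y' : Qt}, A.Reach Y w Y' →
      ∀ w₀ : TW V S, G.IsTW w₀ → Y.1 = G.lquot X w₀ →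
      ∃ w₀' : TW V S, G.IsTW w₀' ∧ Y'.1 = G.lquot X w₀' ∧ w₀'.1 = w₀.1 ∧
        w₀'.2.1 = w₀.2.1 ++ w ∧ w₀'.2.2 = mu Y' := by
    intro Y w Y' hr
    induction hr with
    | nil q =>
        intro w₀ hw₀ hY
        exact ⟨w₀, hw₀, hY, rfl, (List.append_nil _).symm, (hmu2 q w₀ hY).symm⟩
    | cons e hr ih =>
        intro w₀ hw₀ hY
        have ha : G.d0 e.1.2 = w₀.2.2 := e.2.1.trans (hmu2 e.1.1 w₀ hY)
        have h1 : (A.t e).1 = G.lquot X (w₀.1, w₀.2.1 ++ [e.1.2], G.d1 e.1.2) := by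
          show lqL G e.1.1.1 e.1.2 = _
          rw [hY]
          exact lqL_lquot hw₀ ha
        obtain ⟨w₀', h2, h3, h4, h5, h6⟩ := ih _
          (show G.IsTW (w₀.1, w₀.2.1 ++ [e.1.2], G.d1 e.1.2) from G.comp_snoc hw₀ ha) h1
        refine ⟨w₀', h2, h3, h4, ?_, h6⟩
        rw [h5]
        simp
        rfl
  -- completeness of runs
  have run_complete : ∀ (m : List S) (w₀ : TW V S), G.IsTW w₀ →
      ∀ (Y : Qt), Y.1 = G.lquot X w₀ → ∀ v : V, G.Comp (mu Y) m v →
      (w₀.1, w₀.2.1 ++ m, v) ∈ X →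
      ∃ Y' : Qt, A.Reach Y m Y' ∧ ((v, [], v) : TW V S) ∈ Y'.1 ∧ mu Y' = v := by
    intro m
    induction m with
    | nil =>
        intro w₀ hw₀ Y hY v hcomp hmem
        have hv : v = w₀.2.2 := by
          have := hmu2 Y w₀ hY
          exact (hcomp : mu Y = v).symm.trans this
        refine ⟨Y, Auto.Reach.nil Y, ?_, hcomp⟩
        rw [hY]
        exact ⟨rfl, hv, hmem⟩
    | cons a m ih =>
        intro w₀ hw₀ Y hY v hcomp hmem
        obtain ⟨ha0, hcomp'⟩ := hcomp
        have ha : G.d0 a = w₀.2.2 := ha0.trans (hmu2 Y w₀ hY)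
        have hmem' : (w₀.1, (w₀.2.1 ++ [a]) ++ m, v) ∈ X := by
          rw [List.append_assoc, List.singleton_append]
          exact hmem
        have hne : (lqL G Y.1 a).Nonempty := by
          refine ⟨(G.d1 a, m, v), ?_⟩
          rw [hY, lqL_lquot hw₀ ha]
          exact ⟨hcomp', rfl, hmem'⟩
        let e : Et := ⟨(Y, a), ha0, hne⟩
        have hte : (A.t e).1 = G.lquot X (w₀.1, w₀.2.1 ++ [a], G.d1 a) := by
          show lqL G Y.1 a = _
          rw [hY]
          exact lqL_lquot hw₀ ha
        have hcomp2 : G.Comp (A.μ (A.t e)) m v := by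
          rw [A.tgt_ok e]
          exact hcomp'
        obtain ⟨Y', hr, hF, hmuY'⟩ := ih _
          (show G.IsTW (w₀.1, w₀.2.1 ++ [a], G.d1 a) from G.comp_snoc hw₀ ha)
          (A.t e) hte v hcomp2 hmem'
        exact ⟨Y', Auto.Reach.cons e hr, hF, hmuY'⟩
  refine ⟨Qt, Et, hQt, hEt, A, ?_⟩
  ext x
  constructor
  · rintro ⟨Y, Y', hYI, hY'F, hr, hμY, hμY'⟩
    obtain ⟨v, hYv⟩ := hYI
    obtain ⟨w₀', h2, h3, h4, h5, h6⟩ := run_sound hr (v, [], v) rfl hYv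
    obtain ⟨v', hv'⟩ := hY'F
    rw [h3] at hv'
    obtain ⟨-, hv'1, hv'2⟩ := hv'
    have hvm : v = mu Y := (hmu2 Y (v, [], v) hYv).symm
    have hxmem : (w₀'.1, w₀'.2.1 ++ ([] : List S), v') ∈ X := hv'2
    rw [List.append_nil] at hxmem
    have e1 : w₀'.1 = x.1 := h4.trans (hvm.trans hμY)
    have e2 : w₀'.2.1 = x.2.1 := by rw [h5]; exact List.nil_append _
    have e3 : v' = x.2.2 := hv'1.trans (h6.trans hμY')
    rw [e1, e2, e3] at hxmem
    exact hxmem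
  · intro hx
    have hTW := hX x hx
    have hw₀ : G.IsTW ((x.1, [], x.1) : TW V S) := rfl
    have hYmem : G.lquot X (x.1, ([] : List S), x.1) ∈ suffQ G X := ⟨_, hw₀, rfl⟩
    have hxin : x ∈ G.lquot X (x.1, ([] : List S), x.1) := ⟨hTW, rfl, hx⟩
    let Y : Qt := ⟨G.lquot X (x.1, ([] : List S), x.1), hYmem, ⟨x, hxin⟩⟩
    have hmuY : mu Y = x.1 := (hmu Y x hxin).symm
    obtain ⟨Y', hr, hF, hmuY'⟩ := run_complete x.2.1 (x.1, ([] : List S), x.1) hw₀ Y rfl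
      x.2.2 (by rw [hmuY]; exact hTW) hx
    exact ⟨Y, Y', ⟨x.1, rfl⟩, ⟨x.2.2, hF⟩, hr, hmuY, hmuY'⟩

/-- Myhill-Nerode theorem: if every two-vertex induced subgraph
of `(V,S)` is finite, then `X ⊆ (V,S)*` is regular iff its set of left
quotients `suff(X)` is finite. -/
theorem regular_iff_suffQ_finite {V S : Type} (G : GraphAlphabet V S)
    (hfin : ∀ u v : V,
      {a : S | (G.d0 a = u ∨ G.d0 a = v) ∧ (G.d1 a = u ∨ G.d1 a = v)}.Finite)
    (X : Set (TW V S)) (hX : ∀ x ∈ X, G.IsTW x) :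
    Regular G X ↔ (suffQ G X).Finite := by
  exact ⟨suffQ_finite_of_regular G X, regular_of_suffQ_finite G hfin X hX⟩

end GA
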